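/- Hölder norm of the first-order Taylor remainder along Hölder paths (Lemma D.1): let 0 < β < 1 and n, m ≥ 1. Let f : ℝ^m → ℝ be twice continuously differentiable with ‖f‖_{C^{2+β}(ℝ^m)} < ∞, and let A, B : Q → ℝ^m be continuously differentiable on Q := [0,1]^n with finite C¹ norms ‖A‖_{C¹}, ‖B‖_{C¹} (sup of the norms of the values and of the derivatives). Define g : Q → ℝ by g(x) := f(A(x) + B(x)) − f(A(x)) − ⟨∇f(A(x)), B(x)⟩. Then there exists a constant C > 0 depending only on n and β such that ‖g‖_{C^β(Q)} ≤ C · ‖f‖_{C^{2+β}(ℝ^m)} · max(1, ‖A‖_{C¹}^β) · ‖B‖_{C¹}². -/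

import Mathlib

open MeasureTheory Real
open scoped ENNReal NNReal RealInnerProductSpace

noncomputable section

abbrev Ed (d : ℕ) : Type := EuclideanSpace ℝ (Fin d)

/-- The closed unit cube `Q = [0,1]^n`. -/
def unitCube (n : ℕ) : Set (Ed n) := {x | ∀ i, x i ∈ Set.Icc (0 : ℝ) 1}

def supDerivOn {d : ℕ} (j : ℕ) (Ω : Set (Ed d)) (f : Ed d → ℝ) : ℝ≥0∞ :=
  ⨆ x ∈ Ω, (‖iteratedFDerivWithin ℝ j f Ω x‖₊ : ℝ≥0∞)

def holderSemiOn {d : ℕ} (k : ℕ) (ε : ℝ) (Ω : Set (Ed d)) (f : Ed d → ℝ) : ℝ≥0∞ :=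
  ⨆ (x ∈ Ω) (y ∈ Ω) (_ : x ≠ y),
    (‖iteratedFDerivWithin ℝ k f Ω x - iteratedFDerivWithin ℝ k f Ω y‖₊ : ℝ≥0∞) /
      (‖x - y‖₊ : ℝ≥0∞) ^ ε

/-- The Hölder norm `‖f‖_{C^α(Ω)}`, valued in `ℝ≥0∞`. -/
def holderNormOn {d : ℕ} (α : ℝ) (Ω : Set (Ed d)) (f : Ed d → ℝ) : ℝ≥0∞ :=
  (∑ j ∈ Finset.range (⌊α⌋₊ + 1), supDerivOn j Ω f) +
  (if α = (⌊α⌋₊ : ℝ) then 0 else holderSemiOn ⌊α⌋₊ (α - ⌊α⌋₊) Ω f)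

/-- The Hölder norm over all of `ℝ^d`. -/
def holderNorm {d : ℕ} (α : ℝ) (f : Ed d → ℝ) : ℝ≥0∞ :=
  holderNormOn α Set.univ f

/-- The `C¹(Ω)` norm of a vector-valued map: sup of values plus sup of derivatives. -/
def c1NormOn {n m : ℕ} (Ω : Set (Ed n)) (A : Ed n → Ed m) : ℝ≥0∞ :=
  (⨆ x ∈ Ω, (‖A x‖₊ : ℝ≥0∞)) + ⨆ x ∈ Ω, (‖fderivWithin ℝ A Ω x‖₊ : ℝ≥0∞)

lemma convex_unitCube (n : ℕ) : Convex ℝ (unitCube n) := by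
  intro x hx y hy a b ha hb hab i
  have hxi := hx i; have hyi := hy i
  have hval : (a • x + b • y) i = a * x i + b * y i := rfl
  constructor
  · rw [hval]; nlinarith [hxi.1, hyi.1]
  · rw [hval]; nlinarith [hxi.2, hyi.2]

lemma norm_sub_le_sqrt {n : ℕ} {x y : Ed n} (hx : x ∈ unitCube n) (hy : y ∈ unitCube n) :
    ‖x - y‖ ≤ Real.sqrt n := by
  rw [EuclideanSpace.norm_eq]
  apply Real.sqrt_le_sqrt
  have : ∀ i, ‖(x - y) i‖ ^ 2 ≤ 1 := by
    intro i
    have h1 := (hx i).1; have h2 := (hx i).2; have h3 := (hy i).1; have h4 := (hy i).2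
    have : (x - y) i = x i - y i := rfl
    rw [this, Real.norm_eq_abs, sq_abs]
    nlinarith
  calc ∑ i, ‖(x - y) i‖ ^ 2 ≤ ∑ _i : Fin n, (1:ℝ) := Finset.sum_le_sum fun i _ => this i
    _ = n := by simp

lemma rpow_add_le_add_rpow' {a b p : ℝ} (ha : 0 ≤ a) (hb : 0 ≤ b) (hp : 0 ≤ p) (hp1 : p ≤ 1) :
    (a + b) ^ p ≤ a ^ p + b ^ p := by
  have h := NNReal.rpow_add_le_add_rpow a.toNNReal b.toNNReal hp hp1
  have h2 : (((a.toNNReal + b.toNNReal) ^ p : ℝ≥0) : ℝ) ≤ ((a.toNNReal ^ p + b.toNNReal ^ p : ℝ≥0) : ℝ) := by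
    exact_mod_cast h
  rw [NNReal.coe_rpow, NNReal.coe_add, NNReal.coe_add, NNReal.coe_rpow, NNReal.coe_rpow,
    Real.coe_toNNReal _ ha, Real.coe_toNNReal _ hb] at h2
  exact h2

lemma norm_le_toReal {E : Type*} [NormedAddCommGroup E] {z : E} {r : ℝ≥0∞}
    (h : (‖z‖₊ : ℝ≥0∞) ≤ r) (hr : r ≠ ⊤) : ‖z‖ ≤ r.toReal := by
  have h2 := ENNReal.toReal_mono hr h
  simpa using h2

section deriv
variable {d : ℕ} {E : Type*} [NormedAddCommGroup E] [NormedSpace ℝ E]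

lemma hasDerivAt_line (u p : Ed d) (s : ℝ) :
    HasDerivAt (fun t : ℝ => u + t • p) p s := by
  have h : HasDerivAt (fun t : ℝ => t • p) ((1:ℝ) • p) s := (hasDerivAt_id s).smul_const p
  simpa using h.const_add u

lemma hasDerivAt_comp_line {g : Ed d → E} (hg : Differentiable ℝ g) (u p : Ed d) (s : ℝ) :
    HasDerivAt (fun t : ℝ => g (u + t • p)) (fderiv ℝ g (u + s • p) p) s :=
  ((hg _).hasFDerivAt).comp_hasDerivAt s (hasDerivAt_line u p s)

end deriv

-- Taylor sup bound
lemma taylor_sup {d : ℕ} {f : Ed d → ℝ} {Fr : ℝ} (hf : ContDiff ℝ 2 f) (hFr : 0 ≤ Fr)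
    (hlip1 : ∀ u v : Ed d, ‖fderiv ℝ f u - fderiv ℝ f v‖ ≤ Fr * ‖u - v‖)
    (u w : Ed d) :
    |f (u + w) - f u - fderiv ℝ f u w| ≤ Fr * ‖w‖ ^ 2 := by
  have hdf : Differentiable ℝ f := hf.differentiable (by norm_num)
  set φ : ℝ → ℝ := fun s => f (u + s • w) - s * (fderiv ℝ f u w) with hφ
  have hder : ∀ s ∈ Set.Icc (0:ℝ) 1, HasDerivWithinAt φ
      (fderiv ℝ f (u + s • w) w - fderiv ℝ f u w) (Set.Icc 0 1) s := by
    intro s _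
    exact (((hasDerivAt_comp_line hdf u w s).sub
      (hasDerivAt_mul_const (fderiv ℝ f u w))).hasDerivWithinAt)
  have hbound : ∀ s ∈ Set.Ico (0:ℝ) 1, ‖fderiv ℝ f (u + s • w) w - fderiv ℝ f u w‖ ≤ Fr * ‖w‖ ^ 2 := by
    intro s hs
    have h1 : fderiv ℝ f (u + s • w) w - fderiv ℝ f u w
        = (fderiv ℝ f (u + s • w) - fderiv ℝ f u) w := by
      simp [ContinuousLinearMap.sub_apply]
    rw [h1]
    calc ‖(fderiv ℝ f (u + s • w) - fderiv ℝ f u) w‖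
        ≤ ‖fderiv ℝ f (u + s • w) - fderiv ℝ f u‖ * ‖w‖ := ContinuousLinearMap.le_opNorm _ _
      _ ≤ (Fr * ‖u + s • w - u‖) * ‖w‖ := by
          gcongr; exact hlip1 _ _
      _ ≤ Fr * ‖w‖ ^ 2 := by
          have : ‖u + s • w - u‖ = |s| * ‖w‖ := by
            simp [norm_smul]
          rw [this, abs_of_nonneg hs.1]
          nlinarith [mul_nonneg (mul_nonneg (sub_nonneg.2 hs.2.le) hFr) (mul_nonneg (norm_nonneg w) (norm_nonneg w))]
  have := norm_image_sub_le_of_norm_deriv_le_segment' hder hbound 1 (by norm_num)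
  have hφ1 : φ 1 = f (u + w) - fderiv ℝ f u w := by simp [hφ]
  have hφ0 : φ 0 = f u := by simp [hφ]
  rw [hφ1, hφ0] at this
  simpa [Real.norm_eq_abs, sub_sub, add_comm] using this

set_option maxHeartbeats 1000000 in
lemma key_diff {d : ℕ} {f : Ed d → ℝ} {Fr a b t rn β : ℝ}
    (hf : ContDiff ℝ 2 f) (hβ0 : 0 < β) (hβ1 : β < 1)
    (hFr : 0 ≤ Fr)
    (hold0 : ∀ u v : Ed d, ‖f u - f v‖ ≤ 3 * Fr * ‖u - v‖ ^ β)
    (hold1 : ∀ u v : Ed d, ‖fderiv ℝ f u - fderiv ℝ f v‖ ≤ 3 * Fr * ‖u - v‖ ^ β)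
    (hlip1 : ∀ u v : Ed d, ‖fderiv ℝ f u - fderiv ℝ f v‖ ≤ Fr * ‖u - v‖)
    (hop1 : ∀ u : Ed d, ‖fderiv ℝ f u‖ ≤ Fr)
    (hop2 : ∀ z : Ed d, ‖fderiv ℝ (fderiv ℝ f) z‖ ≤ Fr)
    (happ2 : ∀ u v : Ed d, ∀ w₁ w₂ : Ed d,
      ‖fderiv ℝ (fderiv ℝ f) u w₁ w₂ - fderiv ℝ (fderiv ℝ f) v w₁ w₂‖
        ≤ Fr * ‖u - v‖ ^ β * ‖w₁‖ * ‖w₂‖)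
    (ha : 0 ≤ a) (hb : 0 ≤ b) (ht : 0 < t) (hrn : 1 ≤ rn) (htrn : t ≤ rn)
    (u v p q : Ed d)
    (hp : ‖p‖ ≤ b) (hq : ‖q‖ ≤ b)
    (huv : ‖u - v‖ ≤ a * t) (hpq : ‖p - q‖ ≤ b * t) :
    |(f (u + p) - f u - fderiv ℝ f u p) - (f (v + q) - f v - fderiv ℝ f v q)|
      ≤ 13 * (1 + rn) * Fr * max 1 (a ^ β) * b ^ 2 * t ^ β := by
  rw [← Real.norm_eq_abs]
  set M : ℝ := max 1 (a ^ β) with hM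
  have hM1 : (1:ℝ) ≤ M := le_max_left _ _
  have haM : a ^ β ≤ M := le_max_right _ _
  set τ : ℝ := t ^ β with hτ
  have hτ0 : 0 < τ := Real.rpow_pos_of_pos ht β
  have hα1 : 0 ≤ a ^ β := Real.rpow_nonneg ha β
  have hβ1' : 0 ≤ b ^ β := Real.rpow_nonneg hb β
  have hdf : Differentiable ℝ f := hf.differentiable (by norm_num)
  have hdf2 : Differentiable ℝ (fderiv ℝ f) :=
    (hf.fderiv_right (m := 1) (by norm_num)).differentiable (by norm_num)
  -- t ≤ rn * τ
  have ht_le : t ≤ rn * τ := by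
    have h1 : t = τ * t ^ (1 - β) := by
      rw [hτ, ← Real.rpow_add ht]; simp
    have h2 : t ^ (1-β) ≤ rn ^ (1-β) := Real.rpow_le_rpow ht.le htrn (by linarith)
    have h3 : rn ^ (1-β) ≤ rn ^ (1:ℝ) := Real.rpow_le_rpow_of_exponent_le hrn (by linarith)
    rw [Real.rpow_one] at h3
    calc t = τ * t ^ (1-β) := h1
      _ ≤ τ * rn := by nlinarith
      _ = rn * τ := by ring
  have hmono : ∀ s c : ℝ, 0 ≤ s → s ≤ c → s ^ β ≤ c ^ β := fun s c hs hsc =>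
    Real.rpow_le_rpow hs hsc hβ0.le
  have habt : ((a + b) * t) ^ β ≤ (a ^ β + b ^ β) * τ := by
    rw [Real.mul_rpow (by linarith) ht.le]
    have := rpow_add_le_add_rpow' ha hb hβ0.le hβ1.le
    nlinarith
  have hat : (a * t) ^ β = a ^ β * τ := Real.mul_rpow ha ht.le
  rcases le_or_gt b 1 with hb1 | hb1
  · -- case b ≤ 1 : second-order argument
    have hbβ1 : b ^ β ≤ 1 := Real.rpow_le_one hb hb1 hβ0.le
    have hM0 : (0:ℝ) ≤ M := by linarith
    have hrn0 : (0:ℝ) ≤ rn := le_trans zero_le_one hrn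
    have hfin : a ^ β + b ^ β + 2 * rn ≤ 13 * (1 + rn) * M := by
      nlinarith [mul_nonneg (sub_nonneg.2 hM1) hrn0, mul_nonneg hM0 hrn0]
    have hcoef : ∀ W : ℝ, 0 ≤ W →
        Fr * ((a ^ β + b ^ β) * τ) * (b * W) + Fr * (b * t) * W
          ≤ Fr * b * ((a ^ β + b ^ β + rn) * τ) * W := by
      intro W hW
      have h3 : Fr * b * t ≤ Fr * b * (rn * τ) :=
        mul_le_mul_of_nonneg_left ht_le (mul_nonneg hFr hb)
      nlinarith [mul_le_mul_of_nonneg_right h3 hW]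
    set K : ℝ := Fr * b * ((a ^ β + b ^ β + rn) * τ) with hK
    have hK0 : 0 ≤ K := mul_nonneg (mul_nonneg hFr hb)
      (mul_nonneg (by nlinarith) hτ0.le)
    set ψ : ℝ → (Ed d →L[ℝ] ℝ) := fun σ =>
      (fderiv ℝ f (u + σ • p) - fderiv ℝ f u) - (fderiv ℝ f (v + σ • q) - fderiv ℝ f v) with hψ
    have hψ0 : ψ 0 = 0 := by simp [hψ]
    have hψder : ∀ σ ∈ Set.Icc (0:ℝ) 1, HasDerivWithinAt ψ
        ((fderiv ℝ (fderiv ℝ f) (u + σ • p)) p - (fderiv ℝ (fderiv ℝ f) (v + σ • q)) q)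
        (Set.Icc 0 1) σ := by
      intro σ _
      exact ((((hasDerivAt_comp_line hdf2 u p σ).sub_const (fderiv ℝ f u)).sub
        ((hasDerivAt_comp_line hdf2 v q σ).sub_const (fderiv ℝ f v))).hasDerivWithinAt)
    have hψ'bound : ∀ σ ∈ Set.Ico (0:ℝ) 1,
        ‖(fderiv ℝ (fderiv ℝ f) (u + σ • p)) p - (fderiv ℝ (fderiv ℝ f) (v + σ • q)) q‖ ≤ K := by
      intro σ hσ
      apply ContinuousLinearMap.opNorm_le_bound _ hK0
      intro w
      have hw := norm_nonneg w
      have hid : ((fderiv ℝ (fderiv ℝ f) (u + σ • p)) p - (fderiv ℝ (fderiv ℝ f) (v + σ • q)) q) w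
          = (fderiv ℝ (fderiv ℝ f) (u + σ • p) p w - fderiv ℝ (fderiv ℝ f) (v + σ • q) p w)
            + fderiv ℝ (fderiv ℝ f) (v + σ • q) (p - q) w := by
        simp only [ContinuousLinearMap.sub_apply, map_sub]
        ring
      have hdist : ‖(u + σ • p) - (v + σ • q)‖ ≤ (a + b) * t := by
        have hidt : (u + σ • p) - (v + σ • q) = (u - v) + σ • (p - q) := by
          rw [smul_sub]; abel
        have hσabs : |σ| ≤ 1 := by rw [abs_of_nonneg hσ.1]; exact hσ.2.le
        rw [hidt]
        calc ‖(u - v) + σ • (p - q)‖ ≤ ‖u - v‖ + ‖σ • (p - q)‖ := norm_add_le _ _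
          _ ≤ a * t + |σ| * ‖p - q‖ := by rw [norm_smul, Real.norm_eq_abs]; gcongr
          _ ≤ a * t + 1 * (b * t) := by
              nlinarith [abs_nonneg σ, norm_nonneg (p - q)]
          _ = (a + b) * t := by ring
      have h1 : ‖fderiv ℝ (fderiv ℝ f) (u + σ • p) p w - fderiv ℝ (fderiv ℝ f) (v + σ • q) p w‖
          ≤ Fr * ((a ^ β + b ^ β) * τ) * (b * ‖w‖) := by
        refine le_trans (happ2 _ _ p w) ?_
        have h2 := le_trans (hmono _ _ (norm_nonneg _) hdist) habt
        have hpn := norm_nonneg p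
        have hbase : 0 ≤ ‖(u + σ • p) - (v + σ • q)‖ ^ β := Real.rpow_nonneg (norm_nonneg _) β
        calc Fr * ‖(u + σ • p) - (v + σ • q)‖ ^ β * ‖p‖ * ‖w‖
            ≤ Fr * ((a ^ β + b ^ β) * τ) * b * ‖w‖ := by gcongr
          _ = Fr * ((a ^ β + b ^ β) * τ) * (b * ‖w‖) := by ring
      have h2 : ‖fderiv ℝ (fderiv ℝ f) (v + σ • q) (p - q) w‖ ≤ Fr * (b * t) * ‖w‖ := by
        calc ‖fderiv ℝ (fderiv ℝ f) (v + σ • q) (p - q) w‖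
            ≤ ‖(fderiv ℝ (fderiv ℝ f) (v + σ • q)) (p - q)‖ * ‖w‖ :=
              ContinuousLinearMap.le_opNorm _ _
          _ ≤ (‖fderiv ℝ (fderiv ℝ f) (v + σ • q)‖ * ‖p - q‖) * ‖w‖ := by
              gcongr; exact ContinuousLinearMap.le_opNorm _ _
          _ ≤ (Fr * (b * t)) * ‖w‖ := by
              gcongr; exact hop2 _
          _ = Fr * (b * t) * ‖w‖ := by ring
      calc ‖((fderiv ℝ (fderiv ℝ f) (u + σ • p)) p - (fderiv ℝ (fderiv ℝ f) (v + σ • q)) q) w‖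
          ≤ Fr * ((a ^ β + b ^ β) * τ) * (b * ‖w‖) + Fr * (b * t) * ‖w‖ := by
            rw [hid]; exact le_trans (norm_add_le _ _) (add_le_add h1 h2)
        _ ≤ K * ‖w‖ := by
            rw [hK]
            exact hcoef ‖w‖ hw
    have hψle : ∀ s ∈ Set.Icc (0:ℝ) 1, ‖ψ s‖ ≤ K := by
      intro s hs
      have := norm_image_sub_le_of_norm_deriv_le_segment' hψder hψ'bound s hs
      rw [hψ0, sub_zero, sub_zero] at this
      calc ‖ψ s‖ ≤ K * s := this
        _ ≤ K * 1 := by nlinarith [hs.2, hs.1]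
        _ = K := mul_one K
    -- now the scalar function h
    set c : ℝ := fderiv ℝ f u p - fderiv ℝ f v q with hc
    set h : ℝ → ℝ := fun s => f (u + s • p) - f (v + s • q) - s * c with hh
    have hhder : ∀ s ∈ Set.Icc (0:ℝ) 1, HasDerivWithinAt h
        (fderiv ℝ f (u + s • p) p - fderiv ℝ f (v + s • q) q - c) (Set.Icc 0 1) s := by
      intro s _
      exact (((hasDerivAt_comp_line hdf u p s).sub (hasDerivAt_comp_line hdf v q s)).sub
        (hasDerivAt_mul_const c)).hasDerivWithinAt
    set K2 : ℝ := K * b + Fr * b * (rn * τ) * b with hK2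
    have hK20 : 0 ≤ K2 := add_nonneg (mul_nonneg hK0 hb)
      (mul_nonneg (mul_nonneg (mul_nonneg hFr hb) (mul_nonneg hrn0 hτ0.le)) hb)
    have hhbound : ∀ s ∈ Set.Ico (0:ℝ) 1,
        ‖fderiv ℝ f (u + s • p) p - fderiv ℝ f (v + s • q) q - c‖ ≤ K2 := by
      intro s hs
      have hid2 : fderiv ℝ f (u + s • p) p - fderiv ℝ f (v + s • q) q - c
          = (ψ s) p + (fderiv ℝ f (v + s • q) - fderiv ℝ f v) (p - q) := by
        simp only [hψ, hc, ContinuousLinearMap.sub_apply, map_sub]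
        ring
      rw [hid2]
      have hA : ‖(ψ s) p‖ ≤ K * b := by
        calc ‖(ψ s) p‖ ≤ ‖ψ s‖ * ‖p‖ := ContinuousLinearMap.le_opNorm _ _
          _ ≤ K * b := by
              have := hψle s (Set.mem_Icc.mpr ⟨hs.1, hs.2.le⟩)
              exact mul_le_mul this hp (norm_nonneg _) hK0
      have hB : ‖(fderiv ℝ f (v + s • q) - fderiv ℝ f v) (p - q)‖ ≤ Fr * b * (rn * τ) * b := by
        calc ‖(fderiv ℝ f (v + s • q) - fderiv ℝ f v) (p - q)‖
            ≤ ‖fderiv ℝ f (v + s • q) - fderiv ℝ f v‖ * ‖p - q‖ :=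
              ContinuousLinearMap.le_opNorm _ _
          _ ≤ (Fr * ‖(v + s • q) - v‖) * (b * t) :=
              mul_le_mul (hlip1 _ _) hpq (norm_nonneg _) (mul_nonneg hFr (norm_nonneg _))
          _ ≤ (Fr * b) * (b * (rn * τ)) := by
              have hnv : ‖(v + s • q) - v‖ ≤ b := by
                have hsq : (v + s • q) - v = s • q := by abel
                rw [hsq, norm_smul, Real.norm_eq_abs, abs_of_nonneg hs.1]
                nlinarith [norm_nonneg q, hs.1, hs.2.le]
              have hbtr : b * t ≤ b * (rn * τ) := mul_le_mul_of_nonneg_left ht_le hb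
              exact mul_le_mul (mul_le_mul_of_nonneg_left hnv hFr) hbtr
                (mul_nonneg hb ht.le) (mul_nonneg hFr hb)
          _ = Fr * b * (rn * τ) * b := by ring
      calc ‖(ψ s) p + (fderiv ℝ f (v + s • q) - fderiv ℝ f v) (p - q)‖
          ≤ ‖(ψ s) p‖ + ‖(fderiv ℝ f (v + s • q) - fderiv ℝ f v) (p - q)‖ := norm_add_le _ _
        _ ≤ K2 := by rw [hK2]; exact add_le_add hA hB
    have hmvt := norm_image_sub_le_of_norm_deriv_le_segment' hhder hhbound 1 (by norm_num)
    have hh1 : h 1 = f (u + p) - f (v + q) - c := by simp [hh]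
    have hh0 : h 0 = f u - f v := by simp [hh]
    have hgoal0 : (f (u + p) - f u - fderiv ℝ f u p) - (f (v + q) - f v - fderiv ℝ f v q)
        = h 1 - h 0 := by rw [hh1, hh0, hc]; ring
    rw [hgoal0]
    have habs : ‖h 1 - h 0‖ ≤ K2 := by
      have := hmvt
      rw [sub_zero] at this
      simpa using this
    refine le_trans habs ?_
    rw [hK2, hK]
    have key : Fr * b * ((a ^ β + b ^ β + rn) * τ) * b + Fr * b * (rn * τ) * b
        = Fr * b ^ 2 * τ * (a ^ β + b ^ β + 2 * rn) := by ring
    rw [key]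
    calc Fr * b ^ 2 * τ * (a ^ β + b ^ β + 2 * rn)
        ≤ Fr * b ^ 2 * τ * (13 * (1 + rn) * M) :=
          mul_le_mul_of_nonneg_left hfin
            (mul_nonneg (mul_nonneg hFr (sq_nonneg b)) hτ0.le)
      _ = 13 * (1 + rn) * Fr * M * b ^ 2 * τ := by ring
  · -- case b > 1 : first-order argument
    have hbb : b ≤ b ^ 2 := by nlinarith
    have hbβb : b ^ β ≤ b := by
      have h1 : b ^ β ≤ b ^ (1:ℝ) := Real.rpow_le_rpow_of_exponent_le hb1.le hβ1.le
      rwa [Real.rpow_one] at h1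
    have hM0 : (0:ℝ) ≤ M := by linarith
    have hrn0 : (0:ℝ) ≤ rn := le_trans zero_le_one hrn
    have h1b2 : (1:ℝ) ≤ b ^ 2 := by nlinarith
    have hb2M : b ^ 2 ≤ M * b ^ 2 := by nlinarith [mul_nonneg (sub_nonneg.2 hM1) (sq_nonneg b)]
    have f3 : a ^ β * b ≤ M * b ^ 2 := mul_le_mul haM hbb hb hM0
    have f4 : b * rn ≤ M * b ^ 2 * rn :=
      mul_le_mul_of_nonneg_right (le_trans hbb hb2M) hrn0
    have hS : 3 * (a ^ β + b ^ β) + 3 * a ^ β + (3 * (a ^ β * b) + b * rn)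
        ≤ 13 * (1 + rn) * (M * b ^ 2) := by
      nlinarith [mul_nonneg (mul_nonneg hM0 (sq_nonneg b)) (by linarith : (0:ℝ) ≤ 1 + 12 * rn),
        mul_nonneg hM0 (sub_nonneg.2 h1b2)]
    have hT1 : ‖f (u + p) - f (v + q)‖ ≤ 3 * Fr * ((a ^ β + b ^ β) * τ) := by
      have hd : ‖(u + p) - (v + q)‖ ≤ (a + b) * t := by
        have hidt : (u + p) - (v + q) = (u - v) + (p - q) := by abel
        rw [hidt]
        calc ‖(u - v) + (p - q)‖ ≤ ‖u - v‖ + ‖p - q‖ := norm_add_le _ _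
          _ ≤ a * t + b * t := add_le_add huv hpq
          _ = (a + b) * t := by ring
      refine le_trans (hold0 _ _) ?_
      have h2 := le_trans (hmono _ _ (norm_nonneg _) hd) habt
      nlinarith
    have hT2 : ‖f u - f v‖ ≤ 3 * Fr * (a ^ β * τ) := by
      refine le_trans (hold0 _ _) ?_
      have h2 : ‖u - v‖ ^ β ≤ a ^ β * τ := by rw [← hat]; exact hmono _ _ (norm_nonneg _) huv
      nlinarith
    have hT3 : ‖fderiv ℝ f u p - fderiv ℝ f v q‖
        ≤ 3 * Fr * (a ^ β * τ) * b + Fr * (b * t) := by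
      have hid3 : fderiv ℝ f u p - fderiv ℝ f v q
          = (fderiv ℝ f u - fderiv ℝ f v) p + fderiv ℝ f v (p - q) := by
        simp only [ContinuousLinearMap.sub_apply, map_sub]; ring
      rw [hid3]
      have hA : ‖(fderiv ℝ f u - fderiv ℝ f v) p‖ ≤ 3 * Fr * (a ^ β * τ) * b := by
        calc ‖(fderiv ℝ f u - fderiv ℝ f v) p‖ ≤ ‖fderiv ℝ f u - fderiv ℝ f v‖ * ‖p‖ :=
            ContinuousLinearMap.le_opNorm _ _
          _ ≤ (3 * Fr * ‖u - v‖ ^ β) * b :=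
              mul_le_mul (hold1 _ _) hp (norm_nonneg _)
                (mul_nonneg (by positivity) (Real.rpow_nonneg (norm_nonneg _) β))
          _ ≤ 3 * Fr * (a ^ β * τ) * b := by
              have h2 : ‖u - v‖ ^ β ≤ a ^ β * τ := by
                rw [← hat]; exact hmono _ _ (norm_nonneg _) huv
              have h3 : 3 * Fr * ‖u - v‖ ^ β ≤ 3 * Fr * (a ^ β * τ) :=
                mul_le_mul_of_nonneg_left h2 (by positivity)
              exact mul_le_mul_of_nonneg_right h3 hb
      have hB : ‖fderiv ℝ f v (p - q)‖ ≤ Fr * (b * t) := by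
        calc ‖fderiv ℝ f v (p - q)‖ ≤ ‖fderiv ℝ f v‖ * ‖p - q‖ :=
            ContinuousLinearMap.le_opNorm _ _
          _ ≤ Fr * (b * t) :=
              mul_le_mul (hop1 _) hpq (norm_nonneg _) hFr
      exact le_trans (norm_add_le _ _) (add_le_add hA hB)
    have htotal : ‖(f (u + p) - f u - fderiv ℝ f u p) - (f (v + q) - f v - fderiv ℝ f v q)‖
        ≤ 3 * Fr * ((a ^ β + b ^ β) * τ) + 3 * Fr * (a ^ β * τ) + (3 * Fr * (a ^ β * τ) * b + Fr * (b * t)) := by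
      have hre : (f (u + p) - f u - fderiv ℝ f u p) - (f (v + q) - f v - fderiv ℝ f v q)
          = (f (u + p) - f (v + q)) - (f u - f v) - (fderiv ℝ f u p - fderiv ℝ f v q) := by ring
      rw [hre]
      calc ‖(f (u + p) - f (v + q)) - (f u - f v) - (fderiv ℝ f u p - fderiv ℝ f v q)‖
          ≤ ‖(f (u + p) - f (v + q)) - (f u - f v)‖ + ‖fderiv ℝ f u p - fderiv ℝ f v q‖ :=
            norm_sub_le _ _
        _ ≤ (‖f (u + p) - f (v + q)‖ + ‖f u - f v‖) + ‖fderiv ℝ f u p - fderiv ℝ f v q‖ := by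
            gcongr; exact norm_sub_le _ _
        _ ≤ _ := by
            have := add_le_add (add_le_add hT1 hT2) hT3
            linarith
    refine le_trans htotal ?_
    have hbt2 : Fr * (b * t) ≤ Fr * (b * (rn * τ)) :=
      mul_le_mul_of_nonneg_left (mul_le_mul_of_nonneg_left ht_le hb) hFr
    have hstep : 3 * Fr * ((a ^ β + b ^ β) * τ) + 3 * Fr * (a ^ β * τ)
          + (3 * Fr * (a ^ β * τ) * b + Fr * (b * (rn * τ)))
        = Fr * τ * (3 * (a ^ β + b ^ β) + 3 * a ^ β + (3 * (a ^ β * b) + b * rn)) := by ring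
    have hmul := mul_le_mul_of_nonneg_left hS (mul_nonneg hFr hτ0.le)
    calc 3 * Fr * ((a ^ β + b ^ β) * τ) + 3 * Fr * (a ^ β * τ)
          + (3 * Fr * (a ^ β * τ) * b + Fr * (b * t))
        ≤ 3 * Fr * ((a ^ β + b ^ β) * τ) + 3 * Fr * (a ^ β * τ)
          + (3 * Fr * (a ^ β * τ) * b + Fr * (b * (rn * τ))) := by linarith
      _ = Fr * τ * (3 * (a ^ β + b ^ β) + 3 * a ^ β + (3 * (a ^ β * b) + b * rn)) := hstep
      _ ≤ Fr * τ * (13 * (1 + rn) * (M * b ^ 2)) := hmul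
      _ = 13 * (1 + rn) * Fr * M * b ^ 2 * τ := by ring

lemma hold_of_lip {E F' : Type*} [NormedAddCommGroup E] [NormedAddCommGroup F']
    {φ : E → F'} {Fr β : ℝ} (hβ0 : 0 < β) (hβ1 : β < 1) (hFr : 0 ≤ Fr)
    (hlip : ∀ u v, ‖φ u - φ v‖ ≤ Fr * ‖u - v‖) (hbd : ∀ u, ‖φ u‖ ≤ Fr) :
    ∀ u v, ‖φ u - φ v‖ ≤ 3 * Fr * ‖u - v‖ ^ β := by
  intro u v
  rcases eq_or_ne u v with rfl | hne
  · simp only [sub_self, norm_zero]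
    positivity
  · have hs0 : 0 < ‖u - v‖ := by rwa [norm_sub_pos_iff]
    have hsβ : 0 ≤ ‖u - v‖ ^ β := Real.rpow_nonneg (norm_nonneg _) β
    rcases le_or_gt ‖u - v‖ 1 with h1 | h1
    · have h2 : ‖u - v‖ ≤ ‖u - v‖ ^ β := by
        have h3 := Real.rpow_le_rpow_of_exponent_ge hs0 h1 hβ1.le
        rwa [Real.rpow_one] at h3
      calc ‖φ u - φ v‖ ≤ Fr * ‖u - v‖ := hlip u v
        _ ≤ Fr * ‖u - v‖ ^ β := mul_le_mul_of_nonneg_left h2 hFr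
        _ ≤ 3 * Fr * ‖u - v‖ ^ β := by nlinarith
    · have h2 : (1:ℝ) ≤ ‖u - v‖ ^ β := by
        have h3 := Real.rpow_le_rpow (by norm_num : (0:ℝ) ≤ 1) h1.le hβ0.le
        rwa [Real.one_rpow] at h3
      calc ‖φ u - φ v‖ ≤ ‖φ u‖ + ‖φ v‖ := norm_sub_le _ _
        _ ≤ 2 * Fr := by linarith [hbd u, hbd v]
        _ ≤ 3 * Fr * ‖u - v‖ ^ β := by nlinarith

set_option maxHeartbeats 2000000 in
/-- **Hölder norm of the first-order Taylor remainder along Hölder paths** (Lemma D.1). -/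
theorem taylor_remainder_holder_bound
    (n m : ℕ) (hn : 1 ≤ n) (hm : 1 ≤ m) (β : ℝ) (hβ0 : 0 < β) (hβ1 : β < 1) :
    ∃ C : ℝ, 0 < C ∧
      ∀ (f : Ed m → ℝ), ContDiff ℝ 2 f → holderNorm (2 + β) f ≠ ⊤ →
        ∀ (A B : Ed n → Ed m),
          ContDiffOn ℝ 1 A (unitCube n) → ContDiffOn ℝ 1 B (unitCube n) →
          c1NormOn (unitCube n) A ≠ ⊤ → c1NormOn (unitCube n) B ≠ ⊤ →
          holderNormOn β (unitCube n)
              (fun x => f (A x + B x) - f (A x) - ⟪gradient f (A x), B x⟫) ≤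
            ENNReal.ofReal C * holderNorm (2 + β) f *
              max 1 (c1NormOn (unitCube n) A ^ β) * c1NormOn (unitCube n) B ^ 2 := by
  have hrn1 : 1 ≤ Real.sqrt n := by
    rw [Real.one_le_sqrt]
    exact_mod_cast hn
  refine ⟨26 * (1 + Real.sqrt n), by positivity, ?_⟩
  intro f hf hF A B hA hB hAfin hBfin
  set rn : ℝ := Real.sqrt n with hrn
  set Q : Set (Ed n) := unitCube n with hQdef
  -- rewrite the gradient as fderiv
  have hgrad : (fun x => f (A x + B x) - f (A x) - ⟪gradient f (A x), B x⟫)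
      = fun x => f (A x + B x) - f (A x) - fderiv ℝ f (A x) (B x) := by
    funext x
    have : ⟪gradient f (A x), B x⟫ = fderiv ℝ f (A x) (B x) :=
      InnerProductSpace.toDual_symm_apply
    rw [this]
  rw [hgrad]
  set g : Ed n → ℝ := fun x => f (A x + B x) - f (A x) - fderiv ℝ f (A x) (B x) with hg
  -- decompose the Hölder norm of f
  have hfl : (⌊(2 + β : ℝ)⌋₊) = 2 := by
    rw [Nat.floor_eq_iff (by positivity)]
    constructor
    · push_cast; linarith
    · push_cast; linarith
  have hHeq : holderNorm (2+β) f
      = supDerivOn 0 Set.univ f + supDerivOn 1 Set.univ f + supDerivOn 2 Set.univ f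
        + holderSemiOn 2 β Set.univ f := by
    rw [holderNorm, holderNormOn, hfl]
    rw [if_neg (by push_cast; linarith : (2 + β : ℝ) ≠ ((2:ℕ) : ℝ))]
    have hexp : (2 + β : ℝ) - ((2:ℕ) : ℝ) = β := by push_cast; ring
    rw [hexp]
    rw [Finset.sum_range_succ, Finset.sum_range_succ, Finset.sum_range_one]
  have hS0 : supDerivOn 0 Set.univ f ≤ holderNorm (2+β) f := by
    rw [hHeq]
    exact le_trans (self_le_add_right _ _)
      (le_trans (self_le_add_right _ _) (self_le_add_right _ _))
  have hS1 : supDerivOn 1 Set.univ f ≤ holderNorm (2+β) f := by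
    rw [hHeq]
    exact le_trans (self_le_add_left _ _)
      (le_trans (self_le_add_right _ _) (self_le_add_right _ _))
  have hS2 : supDerivOn 2 Set.univ f ≤ holderNorm (2+β) f := by
    rw [hHeq]
    exact le_trans (self_le_add_left _ _) (self_le_add_right _ _)
  have hSemi : holderSemiOn 2 β Set.univ f ≤ holderNorm (2+β) f := by
    rw [hHeq]
    exact self_le_add_left _ _
  set Fr : ℝ := (holderNorm (2+β) f).toReal with hFrdef
  have hFr0 : 0 ≤ Fr := ENNReal.toReal_nonneg
  -- pointwise facts on iterated derivatives
  have hIj : ∀ (j : ℕ), supDerivOn j Set.univ f ≤ holderNorm (2+β) f →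
      ∀ u, ‖iteratedFDeriv ℝ j f u‖ ≤ Fr := by
    intro j hj u
    apply norm_le_toReal _ hF
    refine le_trans ?_ hj
    have h1 := le_iSup_of_le (f := fun (x : Ed m) =>
        ⨆ (_ : x ∈ Set.univ), (‖iteratedFDerivWithin ℝ j f Set.univ x‖₊ : ℝ≥0∞)) u
      (le_iSup_of_le (Set.mem_univ u) le_rfl)
    simpa [supDerivOn, iteratedFDerivWithin_univ] using h1
  have hb0f : ∀ u, ‖f u‖ ≤ Fr := by
    intro u
    have h1 := hIj 0 hS0 u
    rwa [norm_iteratedFDeriv_zero] at h1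
  have hop1 : ∀ u, ‖fderiv ℝ f u‖ ≤ Fr := by
    intro u
    have h1 := hIj 1 hS1 u
    apply ContinuousLinearMap.opNorm_le_bound _ hFr0
    intro w
    calc ‖fderiv ℝ f u w‖ = ‖iteratedFDeriv ℝ 1 f u ![w]‖ := by
          rw [iteratedFDeriv_one_apply]
          norm_num
      _ ≤ ‖iteratedFDeriv ℝ 1 f u‖ * ‖w‖ := by
          have h2 := (iteratedFDeriv ℝ 1 f u).le_opNorm ![w]
          simpa using h2
      _ ≤ Fr * ‖w‖ := mul_le_mul_of_nonneg_right h1 (norm_nonneg w)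
  have hbil : ∀ u w₁ w₂, ‖fderiv ℝ (fderiv ℝ f) u w₁ w₂‖ ≤ Fr * ‖w₁‖ * ‖w₂‖ := by
    intro u w₁ w₂
    have h1 := hIj 2 hS2 u
    calc ‖fderiv ℝ (fderiv ℝ f) u w₁ w₂‖ = ‖iteratedFDeriv ℝ 2 f u ![w₁, w₂]‖ := by
          rw [iteratedFDeriv_two_apply]
          norm_num
      _ ≤ ‖iteratedFDeriv ℝ 2 f u‖ * (‖w₁‖ * ‖w₂‖) := by
          have h2 := (iteratedFDeriv ℝ 2 f u).le_opNorm ![w₁, w₂]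
          simpa [Fin.prod_univ_two, mul_assoc] using h2
      _ ≤ Fr * (‖w₁‖ * ‖w₂‖) :=
          mul_le_mul_of_nonneg_right h1 (mul_nonneg (norm_nonneg _) (norm_nonneg _))
      _ = Fr * ‖w₁‖ * ‖w₂‖ := by ring
  have hop2 : ∀ z, ‖fderiv ℝ (fderiv ℝ f) z‖ ≤ Fr := by
    intro z
    apply ContinuousLinearMap.opNorm_le_bound _ hFr0
    intro w₁
    apply ContinuousLinearMap.opNorm_le_bound _ (mul_nonneg hFr0 (norm_nonneg _))
    intro w₂
    calc ‖fderiv ℝ (fderiv ℝ f) z w₁ w₂‖ ≤ Fr * ‖w₁‖ * ‖w₂‖ := hbil z w₁ w₂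
      _ = Fr * ‖w₁‖ * ‖w₂‖ := rfl
  have hdf2 : Differentiable ℝ (fderiv ℝ f) :=
    (hf.fderiv_right (m := 1) (by norm_num)).differentiable (by norm_num)
  have hdf : Differentiable ℝ f := hf.differentiable (by norm_num)
  have hlip1 : ∀ u v, ‖fderiv ℝ f u - fderiv ℝ f v‖ ≤ Fr * ‖u - v‖ := by
    intro u v
    exact convex_univ.norm_image_sub_le_of_norm_fderiv_le
      (fun x _ => hdf2 x) (fun x _ => hop2 x)
      (Set.mem_univ v) (Set.mem_univ u)
  have hlip0 : ∀ u v, ‖f u - f v‖ ≤ Fr * ‖u - v‖ := by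
    intro u v
    exact convex_univ.norm_image_sub_le_of_norm_fderiv_le
      (fun x _ => hdf x) (fun x _ => hop1 x)
      (Set.mem_univ v) (Set.mem_univ u)
  have hold0 : ∀ u v, ‖f u - f v‖ ≤ 3 * Fr * ‖u - v‖ ^ β :=
    hold_of_lip hβ0 hβ1 hFr0 hlip0 hb0f
  have hold1 : ∀ u v, ‖fderiv ℝ f u - fderiv ℝ f v‖ ≤ 3 * Fr * ‖u - v‖ ^ β :=
    hold_of_lip hβ0 hβ1 hFr0 hlip1 hop1
  -- Hölder continuity of the second derivative
  have happ2 : ∀ u v w₁ w₂ : Ed m,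
      ‖fderiv ℝ (fderiv ℝ f) u w₁ w₂ - fderiv ℝ (fderiv ℝ f) v w₁ w₂‖
        ≤ Fr * ‖u - v‖ ^ β * ‖w₁‖ * ‖w₂‖ := by
    intro u v w₁ w₂
    rcases eq_or_ne u v with rfl | hne
    · simp only [sub_self, norm_zero]
      have : 0 ≤ ‖u - u‖ ^ β := Real.rpow_nonneg (norm_nonneg _) β
      positivity
    · have hY0 : (‖u - v‖₊ : ℝ≥0∞) ^ β ≠ 0 := by
        have h1 : (‖u - v‖₊ : ℝ≥0∞) ≠ 0 := by
          simp [nnnorm_eq_zero, sub_eq_zero, hne]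
        exact (ENNReal.rpow_pos (pos_iff_ne_zero.mpr h1) ENNReal.coe_ne_top).ne'
      have hYtop : (‖u - v‖₊ : ℝ≥0∞) ^ β ≠ ⊤ := by
        rw [← ENNReal.coe_rpow_of_nonneg _ hβ0.le]
        exact ENNReal.coe_ne_top
      have hsem : (‖iteratedFDerivWithin ℝ 2 f Set.univ u - iteratedFDerivWithin ℝ 2 f Set.univ v‖₊ : ℝ≥0∞)
          / (‖u - v‖₊ : ℝ≥0∞) ^ β ≤ holderNorm (2+β) f := by
        refine le_trans ?_ hSemi
        rw [holderSemiOn]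
        refine le_iSup_of_le u (le_iSup_of_le (Set.mem_univ u)
          (le_iSup_of_le v (le_iSup_of_le (Set.mem_univ v)
          (le_iSup_of_le hne le_rfl))))
      have hmul := (ENNReal.div_le_iff_le_mul (Or.inl hY0) (Or.inl hYtop)).1 hsem
      have hfin : holderNorm (2+β) f * (‖u - v‖₊ : ℝ≥0∞) ^ β ≠ ⊤ :=
        ENNReal.mul_ne_top hF hYtop
      have hnorm := norm_le_toReal hmul hfin
      have htoReal : (holderNorm (2+β) f * (‖u - v‖₊ : ℝ≥0∞) ^ β).toReal
          = Fr * ‖u - v‖ ^ β := by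
        rw [ENNReal.toReal_mul, ← ENNReal.toReal_rpow]
        simp [coe_nnnorm]
        exact Or.inl rfl
      rw [iteratedFDerivWithin_univ, htoReal] at hnorm
      calc ‖fderiv ℝ (fderiv ℝ f) u w₁ w₂ - fderiv ℝ (fderiv ℝ f) v w₁ w₂‖
          = ‖(iteratedFDeriv ℝ 2 f u - iteratedFDeriv ℝ 2 f v) ![w₁, w₂]‖ := by
            rw [ContinuousMultilinearMap.sub_apply, iteratedFDeriv_two_apply,
              iteratedFDeriv_two_apply]
            norm_num
        _ ≤ ‖iteratedFDeriv ℝ 2 f u - iteratedFDeriv ℝ 2 f v‖ * (‖w₁‖ * ‖w₂‖) := by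
            have h2 := (iteratedFDeriv ℝ 2 f u - iteratedFDeriv ℝ 2 f v).le_opNorm ![w₁, w₂]
            simpa [Fin.prod_univ_two, mul_assoc] using h2
        _ ≤ (Fr * ‖u - v‖ ^ β) * (‖w₁‖ * ‖w₂‖) :=
            mul_le_mul_of_nonneg_right hnorm (mul_nonneg (norm_nonneg _) (norm_nonneg _))
        _ = Fr * ‖u - v‖ ^ β * ‖w₁‖ * ‖w₂‖ := by ring
  -- facts about A and B
  set a : ℝ := (c1NormOn Q A).toReal with hadef
  set b : ℝ := (c1NormOn Q B).toReal with hbdef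
  have ha0 : 0 ≤ a := ENNReal.toReal_nonneg
  have hb0 : 0 ≤ b := ENNReal.toReal_nonneg
  have hval : ∀ (D : Ed n → Ed m), c1NormOn Q D ≠ ⊤ → ∀ x ∈ Q,
      ‖D x‖ ≤ (c1NormOn Q D).toReal := by
    intro D hD x hx
    apply norm_le_toReal _ hD
    rw [c1NormOn]
    refine le_trans ?_ (self_le_add_right _ _)
    exact le_iSup_of_le x (le_iSup_of_le hx le_rfl)
  have hderivb : ∀ (D : Ed n → Ed m), c1NormOn Q D ≠ ⊤ → ∀ x ∈ Q,
      ‖fderivWithin ℝ D Q x‖ ≤ (c1NormOn Q D).toReal := by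
    intro D hD x hx
    apply norm_le_toReal _ hD
    rw [c1NormOn]
    refine le_trans ?_ (self_le_add_left _ _)
    exact le_iSup_of_le x (le_iSup_of_le hx le_rfl)
  have hlipA : ∀ x ∈ Q, ∀ y ∈ Q, ‖A x - A y‖ ≤ a * ‖x - y‖ := by
    intro x hx y hy
    exact (convex_unitCube n).norm_image_sub_le_of_norm_fderivWithin_le
      (hA.differentiableOn (by norm_num)) (fun z hz => hderivb A hAfin z hz) hy hx
  have hlipB : ∀ x ∈ Q, ∀ y ∈ Q, ‖B x - B y‖ ≤ b * ‖x - y‖ := by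
    intro x hx y hy
    exact (convex_unitCube n).norm_image_sub_le_of_norm_fderivWithin_le
      (hB.differentiableOn (by norm_num)) (fun z hz => hderivb B hBfin z hz) hy hx
  -- the global constant
  set M : ℝ := max 1 (a ^ β) with hMdef
  have hM1 : (1:ℝ) ≤ M := le_max_left _ _
  have hM0 : (0:ℝ) ≤ M := le_trans zero_le_one hM1
  set X : ℝ := 13 * (1 + rn) * Fr * M * b ^ 2 with hXdef
  have hX0 : 0 ≤ X := by
    have h1 : (0:ℝ) ≤ rn := le_trans zero_le_one hrn1
    rw [hXdef]
    positivity
  -- bound on the sup part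
  have hsup : supDerivOn 0 Q g ≤ ENNReal.ofReal X := by
    rw [supDerivOn]
    refine iSup₂_le fun x hx => ?_
    have h2 : ‖g x‖ ≤ X := by
      have ht := taylor_sup hf hFr0 hlip1 (A x) (B x)
      have hBx : ‖B x‖ ≤ b := by rw [hbdef]; exact hval B hBfin x hx
      have hgx : g x = f (A x + B x) - f (A x) - fderiv ℝ f (A x) (B x) := rfl
      rw [hgx, Real.norm_eq_abs]
      calc |f (A x + B x) - f (A x) - fderiv ℝ f (A x) (B x)| ≤ Fr * ‖B x‖ ^ 2 := ht
        _ ≤ Fr * b ^ 2 := by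
            nlinarith [mul_nonneg hFr0 (mul_nonneg (sub_nonneg.2 hBx)
              (add_nonneg hb0 (norm_nonneg (B x)))), norm_nonneg (B x)]
        _ ≤ X := by
            rw [hXdef]
            nlinarith [mul_nonneg (mul_nonneg hFr0 (sq_nonneg b))
              (by nlinarith : (0:ℝ) ≤ 13 * (1 + rn) * M - 1)]
    have h3 : (‖iteratedFDerivWithin ℝ 0 g Q x‖₊ : ℝ≥0∞) = ENNReal.ofReal ‖g x‖ := by
      rw [← enorm_eq_nnnorm, ← ofReal_norm, norm_iteratedFDerivWithin_zero]
    rw [h3]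
    exact ENNReal.ofReal_le_ofReal h2
  -- bound on the seminorm part
  have hsemi2 : holderSemiOn 0 β Q g ≤ ENNReal.ofReal X := by
    rw [holderSemiOn]
    refine iSup₂_le fun x hx => iSup₂_le fun y hy => iSup_le fun hxy => ?_
    have htpos : 0 < ‖x - y‖ := by rwa [norm_sub_pos_iff]
    have hdiff : ‖g x - g y‖ ≤ X * ‖x - y‖ ^ β := by
      have hk := key_diff hf hβ0 hβ1 hFr0 hold0 hold1 hlip1 hop1 hop2 happ2
        ha0 hb0 htpos hrn1 (norm_sub_le_sqrt hx hy)
        (A x) (A y) (B x) (B y)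
        (by rw [hbdef]; exact hval B hBfin x hx)
        (by rw [hbdef]; exact hval B hBfin y hy)
        (hlipA x hx y hy) (hlipB x hx y hy)
      have hge : g x - g y = (f (A x + B x) - f (A x) - fderiv ℝ f (A x) (B x))
          - (f (A y + B y) - f (A y) - fderiv ℝ f (A y) (B y)) := rfl
      rw [hge, Real.norm_eq_abs, hXdef]
      exact hk
    have hY0 : (‖x - y‖₊ : ℝ≥0∞) ^ β ≠ 0 := by
      have h1 : (‖x - y‖₊ : ℝ≥0∞) ≠ 0 := by
        simp [nnnorm_eq_zero, sub_eq_zero, hxy]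
      exact (ENNReal.rpow_pos (pos_iff_ne_zero.mpr h1) ENNReal.coe_ne_top).ne'
    have hYtop : (‖x - y‖₊ : ℝ≥0∞) ^ β ≠ ⊤ := by
      rw [← ENNReal.coe_rpow_of_nonneg _ hβ0.le]
      exact ENNReal.coe_ne_top
    rw [ENNReal.div_le_iff_le_mul (Or.inl hY0) (Or.inl hYtop)]
    have hIeq : (‖iteratedFDerivWithin ℝ 0 g Q x - iteratedFDerivWithin ℝ 0 g Q y‖₊ : ℝ≥0∞)
        = ENNReal.ofReal ‖g x - g y‖ := by
      rw [← enorm_eq_nnnorm, ← ofReal_norm]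
      congr 1
      rw [iteratedFDerivWithin_zero_eq_comp, Function.comp_apply, Function.comp_apply,
        ← LinearIsometryEquiv.map_sub, LinearIsometryEquiv.norm_map]
    rw [hIeq]
    calc ENNReal.ofReal ‖g x - g y‖ ≤ ENNReal.ofReal (X * ‖x - y‖ ^ β) :=
        ENNReal.ofReal_le_ofReal hdiff
      _ = ENNReal.ofReal X * ENNReal.ofReal (‖x - y‖ ^ β) := ENNReal.ofReal_mul hX0
      _ = ENNReal.ofReal X * (‖x - y‖₊ : ℝ≥0∞) ^ β := by
          rw [← ENNReal.ofReal_rpow_of_nonneg (norm_nonneg _) hβ0.le,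
            ofReal_norm, enorm_eq_nnnorm]
  -- the left-hand side decomposition
  have hflβ : (⌊β⌋₊) = 0 := Nat.floor_eq_zero.mpr hβ1
  have hLHS : holderNormOn β Q g = supDerivOn 0 Q g + holderSemiOn 0 β Q g := by
    rw [holderNormOn, hflβ]
    rw [if_neg (by push_cast; linarith : (β : ℝ) ≠ ((0:ℕ) : ℝ))]
    norm_num
  -- assemble
  have hofFr : ENNReal.ofReal Fr = holderNorm (2+β) f := ENNReal.ofReal_toReal hF
  have hofa : ENNReal.ofReal a = c1NormOn Q A := ENNReal.ofReal_toReal hAfin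
  have hofb : ENNReal.ofReal b = c1NormOn Q B := ENNReal.ofReal_toReal hBfin
  have hmono : Monotone ENNReal.ofReal := fun _ _ h => ENNReal.ofReal_le_ofReal h
  have hofM : ENNReal.ofReal M = max 1 (c1NormOn Q A ^ β) := by
    rw [hMdef, hmono.map_max, ENNReal.ofReal_one,
      ← ENNReal.ofReal_rpow_of_nonneg ha0 hβ0.le, hofa]
  have hofb2 : ENNReal.ofReal (b ^ 2) = c1NormOn Q B ^ 2 := by
    rw [ENNReal.ofReal_pow hb0, hofb]
  calc holderNormOn β Q g = supDerivOn 0 Q g + holderSemiOn 0 β Q g := hLHS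
    _ ≤ ENNReal.ofReal X + ENNReal.ofReal X := add_le_add hsup hsemi2
    _ = ENNReal.ofReal (X + X) := (ENNReal.ofReal_add hX0 hX0).symm
    _ = ENNReal.ofReal (26 * (1 + rn)) * ENNReal.ofReal Fr
        * ENNReal.ofReal M * ENNReal.ofReal (b ^ 2) := by
        rw [← ENNReal.ofReal_mul (by positivity), ← ENNReal.ofReal_mul (by positivity),
          ← ENNReal.ofReal_mul (by positivity)]
        congr 1
        rw [hXdef]
        ring
    _ = ENNReal.ofReal (26 * (1 + rn)) * holderNorm (2 + β) f *
          max 1 (c1NormOn Q A ^ β) * c1NormOn Q B ^ 2 := by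
        rw [hofFr, hofM, hofb2]

end
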